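/- Closedness fails under projection: there exist generators G₁, G₂, G_k and a language K = {a₁a₂a, a₂a₁a} over E₁ = {a₁,a}, E₂ = {a₂,a}, E_k = {a} such that, with L_m(G₁) = {a₁a}, L_m(G₂) = {a₂a}, L_m(G_k) = {ε, a}, the language K is L_m(G)-closed for G = G₁∥G₂∥G_k (i.e., K = \overline{K} ∩ L_m(G)), yet P_k(K) = {a} is not L_m(G_k)-closed (since \overline{P_k(K)} ∩ L_m(G_k) = {ε, a} ≠ {a}). -/
import Mathlib


open scoped Classical

/-- Natural projection: erase letters not in `A`. -/
noncomputable def proj {Ev : Type*} (A : Set Ev) (w : List Ev) : List Ev :=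
  w.filter (fun a => decide (a ∈ A))

/-- Projection of a language. -/
noncomputable def projL {Ev : Type*} (A : Set Ev) (L : Set (List Ev)) : Set (List Ev) :=
  proj A '' L

/-- Words over an alphabet `A`, i.e., `A*`. -/
def star {Ev : Type*} (A : Set Ev) : Set (List Ev) := {w | ∀ a ∈ w, a ∈ A}

/-- Synchronous product of `L₁ ⊆ A*` and `L₂ ⊆ B*`. -/
noncomputable def sync {Ev : Type*} (A B : Set Ev) (L1 L2 : Set (List Ev)) :
    Set (List Ev) :=
  {w | w ∈ star (A ∪ B) ∧ proj A w ∈ L1 ∧ proj B w ∈ L2}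

/-- Prefix closure of a language. -/
def prefixCl {Ev : Type*} (L : Set (List Ev)) : Set (List Ev) := {w | ∃ v, w ++ v ∈ L}

/-- Controllability of `K` with respect to (prefix-closed) `L` and uncontrollable events `Eu`. -/
def controllable {Ev : Type*} (K L : Set (List Ev)) (Eu : Set Ev) : Prop :=
  ∀ s ∈ prefixCl K, ∀ u ∈ Eu, s ++ [u] ∈ L → s ++ [u] ∈ prefixCl K

/-- Supremal controllable sublanguage of `K` w.r.t. `N` and `U`. -/
noncomputable def supC {Ev : Type*} (K N : Set (List Ev)) (U : Set Ev) : Set (List Ev) :=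
  ⋃₀ {M | M ⊆ K ∧ controllable M N U}

/-- `proj A` is an `L`-observer. -/
def observer {Ev : Type*} (A : Set Ev) (L : Set (List Ev)) : Prop :=
  ∀ t ∈ projL A L, ∀ s ∈ prefixCl L, proj A s <+: t →
    ∃ u, s ++ u ∈ L ∧ proj A (s ++ u) = t

/-- `proj A` is locally control consistent (LCC) for `L` (w.r.t. uncontrollable events `Eu`). -/
def lcc {Ev : Type*} (A Eu : Set Ev) (L : Set (List Ev)) : Prop :=
  ∀ s ∈ L, ∀ σ ∈ A ∩ Eu, proj A s ++ [σ] ∈ projL A L →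
    (∃ u, (∀ a ∈ u, a ∉ A) ∧ s ++ u ++ [σ] ∈ L) →
    ∃ u, (∀ a ∈ u, a ∈ Eu ∧ a ∉ A) ∧ s ++ u ++ [σ] ∈ L

/-- Events for the counterexample of STATEMENT 17. -/
inductive Ev17 where
  | a1 | a2 | a
deriving DecidableEq

open Ev17

lemma proj_nil {Ev : Type*} (A : Set Ev) : proj A [] = [] := rfl

lemma proj_cons {Ev : Type*} (A : Set Ev) (x : Ev) (w : List Ev) :
    proj A (x :: w) = if x ∈ A then x :: proj A w else proj A w := by
  by_cases h : x ∈ A <;> simp [proj, List.filter_cons, h]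

def A1 : Set Ev17 := {a1, a}
def A2 : Set Ev17 := {a2, a}

lemma key_nil : ∀ w : List Ev17, proj A1 w = [] → proj A2 w = [] → w = [] := by
  intro w h1 h2
  cases w with
  | nil => rfl
  | cons x t =>
    cases x <;> simp [A1, A2, proj_cons] at h1 h2

lemma key_a : ∀ w : List Ev17, proj A1 w = [a] → proj A2 w = [a] → w = [a] := by
  intro w h1 h2
  cases w with
  | nil => simp [proj_nil] at h1
  | cons x t =>
    cases x <;> simp [A1, A2, proj_cons] at h1 h2
    rw [key_nil t h1 h2]

lemma key_2a : ∀ w : List Ev17, proj A1 w = [a] → proj A2 w = [a2, a] → w = [a2, a] := by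
  intro w h1 h2
  cases w with
  | nil => simp [proj_nil] at h1
  | cons x t =>
    cases x <;> simp [A1, A2, proj_cons] at h1 h2
    rw [key_a t h1 h2]

lemma key_1a : ∀ w : List Ev17, proj A1 w = [a1, a] → proj A2 w = [a] → w = [a1, a] := by
  intro w h1 h2
  cases w with
  | nil => simp [proj_nil] at h1
  | cons x t =>
    cases x <;> simp [A1, A2, proj_cons] at h1 h2
    rw [key_a t h1 h2]

lemma key_main : ∀ w : List Ev17, proj A1 w = [a1, a] → proj A2 w = [a2, a] →
    w = [a1, a2, a] ∨ w = [a2, a1, a] := by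
  intro w h1 h2
  cases w with
  | nil => simp [proj_nil] at h1
  | cons x t =>
    cases x <;> simp [A1, A2, proj_cons] at h1 h2
    · left; rw [key_2a t h1 h2]
    · right; rw [key_1a t h1 h2]


lemma proj_proj {Ev : Type*} (A : Set Ev) (w : List Ev) :
    proj A (proj A w) = proj A w := by
  simp [proj, List.filter_filter]

lemma L1 :
    sync ({a1, a} : Set Ev17) (({a2, a} : Set Ev17) ∪ {a}) {[a1, a]}
      (sync {a2, a} {a} {[a2, a]} {[], [a]}) =
    ({[a1, a2, a], [a2, a1, a]} : Set (List Ev17)) := by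
  have hU : (({a2, a} : Set Ev17) ∪ {a}) = {a2, a} := by
    ext x; simp
  ext w
  constructor
  · rintro ⟨hstar, h1, hsync⟩
    rw [hU] at hsync
    obtain ⟨hs2, h2, h3⟩ := hsync
    rw [proj_proj] at h2
    simp only [Set.mem_singleton_iff] at h1 h2
    exact key_main w h1 h2
  · intro hw
    rcases hw with rfl | rfl <;>
      exact ⟨fun x hx => by cases x <;> simp,
             by simp [proj_cons, proj_nil],
             fun x hx => by
               rw [hU] at hx ⊢
               simp [proj_cons, proj_nil] at hx
               rcases hx with rfl | rfl <;> simp,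
             by simp [proj_cons, proj_nil, proj_proj],
             by simp [proj_cons, proj_nil]⟩

lemma L3 : projL ({a} : Set Ev17) {[a1, a2, a], [a2, a1, a]} = {[a]} := by
  simp [projL, Set.image_insert_eq, proj_cons, proj_nil]

lemma L4 : prefixCl (projL ({a} : Set Ev17) {[a1, a2, a], [a2, a1, a]})
    ∩ ({[], [a]} : Set (List Ev17)) = {[], [a]} := by
  rw [L3]
  apply Set.inter_eq_self_of_subset_right
  rintro w (rfl | rfl)
  · exact ⟨[a], rfl⟩
  · exact ⟨[], rfl⟩

lemma L2 : ({[a1, a2, a], [a2, a1, a]} : Set (List Ev17)) =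
    prefixCl {[a1, a2, a], [a2, a1, a]} ∩
      sync ({a1, a} : Set Ev17) (({a2, a} : Set Ev17) ∪ {a}) {[a1, a]}
        (sync {a2, a} {a} {[a2, a]} {[], [a]}) := by
  rw [L1]
  refine (Set.inter_eq_self_of_subset_right ?_).symm
  intro w hw
  exact ⟨[], by simpa using hw⟩

lemma L5 : projL ({a} : Set Ev17) {[a1, a2, a], [a2, a1, a]} ≠
    prefixCl (projL ({a} : Set Ev17) {[a1, a2, a], [a2, a1, a]})
      ∩ ({[], [a]} : Set (List Ev17)) := by
  rw [L4, L3]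
  intro h
  have : ([] : List Ev17) ∈ ({[a]} : Set (List Ev17)) := h.symm ▸ (by simp)
  simp at this

/-- closedness fails under projection. -/
theorem stmt17 :
    let E1 : Set Ev17 := {a1, a}
    let E2 : Set Ev17 := {a2, a}
    let Ek : Set Ev17 := {a}
    let LmG : Set (List Ev17) :=
      sync E1 (E2 ∪ Ek) {[a1, a]} (sync E2 Ek {[a2, a]} {[], [a]})
    let K : Set (List Ev17) := {[a1, a2, a], [a2, a1, a]}
    LmG = K ∧
    K = prefixCl K ∩ LmG ∧
    projL Ek K = {[a]} ∧
    prefixCl (projL Ek K) ∩ ({[], [a]} : Set (List Ev17)) = {[], [a]} ∧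
    projL Ek K ≠ prefixCl (projL Ek K) ∩ ({[], [a]} : Set (List Ev17)) := by
  exact ⟨L1, L2, L3, L4, L5⟩
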